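/- Let n and τ be positive integers with τ < n and let G be a bipartite simple graph of order n with dissociation number τ. Then q(G) ≤ n, with equality if and only if G is isomorphic to the complete bipartite graph K_{τ,n−τ}. -/

import Mathlib

open scoped Classical

/-- A finset `S` of vertices is a dissociation set of `G`: the subgraph induced by `S`
has maximum degree at most one, i.e. every vertex of `S` has at most one neighbour
inside `S`. -/
def SimpleGraph.IsDissocSet {V : Type*} (G : SimpleGraph V) (S : Finset V) : Prop :=
  ∀ v ∈ S, ∀ u ∈ S, ∀ w ∈ S, G.Adj v u → G.Adj v w → u = w

/-- The dissociation number of `G`: the maximum cardinality of a dissociation set. -/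
noncomputable def SimpleGraph.dissocNum {V : Type*} [Fintype V] (G : SimpleGraph V) : ℕ :=
  sSup {k : ℕ | ∃ S : Finset V, G.IsDissocSet S ∧ S.card = k}

/-- The `A_α`-matrix `A_α(G) = α·D(G) + (1-α)·A(G)`. -/
noncomputable def SimpleGraph.Aalpha {V : Type*} [Fintype V] (G : SimpleGraph V) (α : ℝ) :
    Matrix V V ℝ := fun u v =>
  (if u = v then α * (G.degree u : ℝ) else 0) + (1 - α) * (if G.Adj u v then 1 else 0)

/-- The `A_α`-index of `G`: the largest eigenvalue of `A_α(G)`. -/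
noncomputable def SimpleGraph.lambdaAlpha {V : Type*} [Fintype V] (G : SimpleGraph V)
    (α : ℝ) : ℝ :=
  sSup {t : ℝ | ∃ x : V → ℝ, x ≠ 0 ∧ (G.Aalpha α).mulVec x = t • x}

/-- The signless Laplacian matrix `Q(G) = D(G) + A(G)`. -/
noncomputable def SimpleGraph.signlessLap {V : Type*} [Fintype V] (G : SimpleGraph V) :
    Matrix V V ℝ := fun u v =>
  (if u = v then (G.degree u : ℝ) else 0) + (if G.Adj u v then 1 else 0)

/-- The signless Laplacian spectral radius `q(G)`: the largest eigenvalue of `Q(G)`. -/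
noncomputable def SimpleGraph.qIndex {V : Type*} [Fintype V] (G : SimpleGraph V) : ℝ :=
  sSup {t : ℝ | ∃ x : V → ℝ, x ≠ 0 ∧ (G.signlessLap).mulVec x = t • x}

/-- The join `G ∨ H`: the disjoint union of `G` and `H` together with all edges between
the vertex sets of `G` and `H`. -/
def SimpleGraph.joinG {α β : Type*} (G : SimpleGraph α) (H : SimpleGraph β) :
    SimpleGraph (α ⊕ β) :=
  SimpleGraph.fromRel (fun a b =>
    match a, b with
    | Sum.inl x, Sum.inl y => G.Adj x y
    | Sum.inr x, Sum.inr y => H.Adj x y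
    | Sum.inl _, Sum.inr _ => True
    | Sum.inr _, Sum.inl _ => False)

/-- The disjoint union `G ∪ H`. -/
def SimpleGraph.unionG {α β : Type*} (G : SimpleGraph α) (H : SimpleGraph β) :
    SimpleGraph (α ⊕ β) :=
  SimpleGraph.fromRel (fun a b =>
    match a, b with
    | Sum.inl x, Sum.inl y => G.Adj x y
    | Sum.inr x, Sum.inr y => H.Adj x y
    | _, _ => False)

/-- `k·K₂`: the disjoint union of `k` copies of `K₂`. -/
def matchingGraph (k : ℕ) : SimpleGraph (Fin k × Fin 2) :=
  SimpleGraph.fromRel (fun a b => a.1 = b.1)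

/-- The star on `m` vertices, centred at `0`. -/
def starGraph (m : ℕ) : SimpleGraph (Fin m) :=
  SimpleGraph.fromRel (fun u _ => (u : ℕ) = 0)

/-- The tree `S†_{n,τ}`: take the star `S_{n-τ}` with centre `0` and leaves
`1,…,n-τ-1`; attach exactly two pendant vertices to each leaf of the star and
`3τ-2n+2` pendant vertices to the centre.  Here, with `m = n-τ-1`, vertex `0` is
the centre, vertices `1,…,m` are the star leaves, vertices `m+1,…,3m` are the
pendant vertices attached in consecutive pairs to the star leaves, and vertices
`3m+1,…,n-1` are the pendant vertices at the centre. -/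
def SdaggerGraph (n τ : ℕ) : SimpleGraph (Fin n) :=
  SimpleGraph.fromRel (fun u v =>
    ((u : ℕ) = 0 ∧ ((1 ≤ (v : ℕ) ∧ (v : ℕ) ≤ n - τ - 1) ∨ 3 * (n - τ - 1) < (v : ℕ))) ∨
    (1 ≤ (u : ℕ) ∧ (u : ℕ) ≤ n - τ - 1 ∧ n - τ - 1 < (v : ℕ) ∧ (v : ℕ) ≤ 3 * (n - τ - 1) ∧
      ((v : ℕ) - (n - τ - 1) - 1) / 2 + 1 = (u : ℕ)))

/-- The tree `S_{k₁,k₂}`: a star on `k₁+1` vertices (centre `0`, leaves `1,…,k₁`)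
together with `k₂` pendant paths of length two attached to the centre (the path
vertices are `k₁+1,…,k₁+2k₂`; a vertex at odd offset from `k₁` is adjacent to the
centre and to its successor). -/
def Skk (k₁ k₂ : ℕ) : SimpleGraph (Fin (1 + k₁ + 2 * k₂)) :=
  SimpleGraph.fromRel (fun u v =>
    ((u : ℕ) = 0 ∧ 1 ≤ (v : ℕ) ∧ (v : ℕ) ≤ k₁) ∨
    ((u : ℕ) = 0 ∧ k₁ < (v : ℕ) ∧ ((v : ℕ) - k₁) % 2 = 1) ∨
    (k₁ < (u : ℕ) ∧ ((u : ℕ) - k₁) % 2 = 1 ∧ (v : ℕ) = (u : ℕ) + 1))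

/-- The tree `T¹_{r,p}`: the path `0-1-2-3` on four vertices with `r` pendant paths of
length two attached to the leaf `0` (vertices `4,…,3+2r`) and `p` pendant paths of
length two attached to the leaf `3` (vertices `4+2r,…,3+2r+2p`). -/
def T1Graph (r p : ℕ) : SimpleGraph (Fin (4 + 2 * r + 2 * p)) :=
  SimpleGraph.fromRel (fun u v =>
    ((u : ℕ) + 1 = (v : ℕ) ∧ (v : ℕ) ≤ 3) ∨
    ((u : ℕ) = 0 ∧ 4 ≤ (v : ℕ) ∧ (v : ℕ) < 4 + 2 * r ∧ ((v : ℕ) - 4) % 2 = 0) ∨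
    ((u : ℕ) = 3 ∧ 4 + 2 * r ≤ (v : ℕ) ∧ ((v : ℕ) - 4) % 2 = 0) ∨
    (4 ≤ (u : ℕ) ∧ ((u : ℕ) - 4) % 2 = 0 ∧ (v : ℕ) = (u : ℕ) + 1))

/-- The tree `T²_{r,p}`: `T¹_{r,p}` together with one extra pendant vertex (the last
vertex) attached to the vertex of degree `r+1` of `T¹_{r,p}` (the vertex `0`). -/
def T2Graph (r p : ℕ) : SimpleGraph (Fin (5 + 2 * r + 2 * p)) :=
  SimpleGraph.fromRel (fun u v =>
    ((u : ℕ) + 1 = (v : ℕ) ∧ (v : ℕ) ≤ 3) ∨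
    ((u : ℕ) = 0 ∧ 4 ≤ (v : ℕ) ∧ (v : ℕ) < 4 + 2 * r ∧ ((v : ℕ) - 4) % 2 = 0) ∨
    ((u : ℕ) = 3 ∧ 4 + 2 * r ≤ (v : ℕ) ∧ (v : ℕ) < 4 + 2 * r + 2 * p ∧
      ((v : ℕ) - 4) % 2 = 0) ∨
    (4 ≤ (u : ℕ) ∧ (u : ℕ) < 4 + 2 * r + 2 * p ∧ ((u : ℕ) - 4) % 2 = 0 ∧
      (v : ℕ) = (u : ℕ) + 1) ∨
    ((u : ℕ) = 0 ∧ (v : ℕ) = 4 + 2 * r + 2 * p))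

/-- Subdivision of the edge `uv`: remove the edge `uv` and add one new vertex adjacent
to both `u` and `v`. -/
def SimpleGraph.subdivide {V : Type*} (G : SimpleGraph V) (u v : V) :
    SimpleGraph (V ⊕ Fin 1) :=
  SimpleGraph.fromRel (fun a b =>
    match a, b with
    | Sum.inl x, Sum.inl y => G.Adj x y ∧ ¬(x = u ∧ y = v) ∧ ¬(x = v ∧ y = u)
    | Sum.inl x, Sum.inr _ => x = u ∨ x = v
    | _, _ => False)

/-- Triple subdivision of the edge `uv`: remove the edge `uv` and add three new
vertices `0, 1, 2` forming a path `u - 0 - 1 - 2 - v`. -/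
def SimpleGraph.subdivide3 {V : Type*} (G : SimpleGraph V) (u v : V) :
    SimpleGraph (V ⊕ Fin 3) :=
  SimpleGraph.fromRel (fun a b =>
    match a, b with
    | Sum.inl x, Sum.inl y => G.Adj x y ∧ ¬(x = u ∧ y = v) ∧ ¬(x = v ∧ y = u)
    | Sum.inl x, Sum.inr i => (x = u ∧ i = (0 : Fin 3)) ∨ (x = v ∧ i = (2 : Fin 3))
    | Sum.inr i, Sum.inr j => (i : ℕ) + 1 = (j : ℕ)
    | Sum.inr _, Sum.inl _ => False)

/-- The edge `uv` lies on an internal path of `G`: a path both of whose endpoints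
have degree at least `3` and all of whose internal vertices have degree `2`. -/
def SimpleGraph.OnInternalPath {V : Type*} [Fintype V] (G : SimpleGraph V)
    (u v : V) : Prop :=
  ∃ (a b : V) (w : G.Walk a b), w.IsPath ∧ 3 ≤ G.degree a ∧ 3 ≤ G.degree b ∧
    (∀ x ∈ w.support, x ≠ a → x ≠ b → G.degree x = 2) ∧ s(u, v) ∈ w.edges

/-- The polynomial `P_α(x)` of Theorem 1.3. -/
noncomputable def Ppoly (α : ℝ) (n τ : ℕ) (x : ℝ) : ℝ :=
  x ^ 4 + α * ((n : ℝ) - 2 * τ - 6) * x ^ 3 +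
    (8 * α ^ 2 * τ - 4 * α ^ 2 * n + 4 * α * τ - 2 * α * n - 2 * τ + n + 9 * α ^ 2 +
      6 * α - 3) * x ^ 2 +
    α * (16 * α * n - α ^ 2 * n - 8 * n - 28 * α * τ + 14 * τ - 20 * α + 10) * x +
    (2 * α ^ 3 * n - 17 * α ^ 2 * n + 16 * α * n - 4 * n + 24 * α ^ 2 * τ - 24 * α * τ +
      6 * τ - 2 * α ^ 3 + 17 * α ^ 2 - 16 * α + 4)

/-- The cubic polynomial of Corollary 5.3. -/
noncomputable def Qpoly (n τ : ℕ) (x : ℝ) : ℝ :=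
  x ^ 3 + ((n : ℝ) - 2 * τ - 6) * x ^ 2 + (8 * (τ : ℝ) - 4 * n + 9) * x - (n : ℝ)


lemma deg_cast {V : Type*} [Fintype V] (G : SimpleGraph V) (u : V) :
    ∑ v, (if G.Adj u v then (1:ℝ) else 0) = (G.degree u : ℝ) := by
  rw [Finset.sum_boole, SimpleGraph.degree, SimpleGraph.neighborFinset_eq_filter]

lemma mulVec_eq {V : Type*} [Fintype V] (G : SimpleGraph V) (x : V → ℝ) (u : V) :
    (G.signlessLap.mulVec x) u = ∑ v, (if G.Adj u v then x u + x v else 0) := by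
  simp only [Matrix.mulVec, dotProduct, SimpleGraph.signlessLap, add_mul, ite_mul,
    one_mul, zero_mul, Finset.sum_add_distrib]
  rw [Finset.sum_ite_eq Finset.univ u (fun v => (G.degree u : ℝ) * x v)]
  simp only [Finset.mem_univ, if_true]
  rw [← deg_cast G u, Finset.sum_mul]
  rw [← Finset.sum_add_distrib]
  apply Finset.sum_congr rfl
  intro v _
  split_ifs <;> ring

lemma quad_eq {V : Type*} [Fintype V] (G : SimpleGraph V) (x : V → ℝ) :
    ∑ u, ∑ v, (if G.Adj u v then (x u + x v)^2 else 0)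
      = 2 * ∑ u, x u * (G.signlessLap.mulVec x) u := by
  have h1 : ∀ u, x u * (G.signlessLap.mulVec x) u
      = ∑ v, (if G.Adj u v then x u * (x u + x v) else 0) := by
    intro u
    rw [mulVec_eq, Finset.mul_sum]
    refine Finset.sum_congr rfl fun v _ => ?_
    split_ifs <;> ring
  have h2 : (∑ u, ∑ v, (if G.Adj u v then x v * (x v + x u) else 0))
      = ∑ u, ∑ v, (if G.Adj u v then x u * (x u + x v) else 0) := by
    rw [Finset.sum_comm]
    refine Finset.sum_congr rfl fun u _ => Finset.sum_congr rfl fun v _ => ?_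
    rw [G.adj_comm]
  simp only [h1]
  rw [two_mul]
  calc ∑ u, ∑ v, (if G.Adj u v then (x u + x v)^2 else 0)
      = ∑ u, ∑ v, ((if G.Adj u v then x u * (x u + x v) else 0)
          + (if G.Adj u v then x v * (x v + x u) else 0)) := by
        refine Finset.sum_congr rfl fun u _ => Finset.sum_congr rfl fun v _ => ?_
        split_ifs <;> ring
    _ = (∑ u, ∑ v, (if G.Adj u v then x u * (x u + x v) else 0))
          + ∑ u, ∑ v, (if G.Adj u v then x v * (x v + x u) else 0) := by
        simp only [Finset.sum_add_distrib]
    _ = _ := by rw [h2]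

lemma fin2_eq {a b c : Fin 2} (h1 : a ≠ b) (h2 : c ≠ b) : a = c := by
  fin_cases a <;> fin_cases b <;> fin_cases c <;> simp_all

lemma key_lemma {V : Type*} [Fintype V] (G : SimpleGraph V) (C : V → Fin 2)
    (hC : ∀ ⦃u v⦄, G.Adj u v → C u ≠ C v) (t : ℝ) (x : V → ℝ) (hx : x ≠ 0)
    (hev : G.signlessLap.mulVec x = t • x) :
    t ≤ (Fintype.card V : ℝ) ∧
      (t = (Fintype.card V : ℝ) → ∀ u v, C u ≠ C v → G.Adj u v) := by
  set ε : V → ℝ := fun v => if C v = 0 then 1 else -1 with hε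
  set y : V → ℝ := fun v => ε v * x v with hy
  have hε2 : ∀ v, ε v * ε v = 1 := by intro v; simp only [hε]; split_ifs <;> norm_num
  have hysq : ∀ v, y v ^ 2 = x v ^ 2 := by
    intro v; simp only [hy]; rw [mul_pow, sq, hε2, one_mul]
  have hyx : ∀ v, y v = 0 → x v = 0 := by
    intro v h
    have := congrArg (fun r => ε v * r) h
    simp only [mul_zero, hy, ← mul_assoc, hε2, one_mul] at this
    exact this
  obtain ⟨v₀, hv₀⟩ : ∃ v, x v ≠ 0 := Function.ne_iff.mp hx
  have hS : (0:ℝ) < ∑ v, x v ^ 2 := by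
    apply Finset.sum_pos' (fun v _ => sq_nonneg _) ⟨v₀, Finset.mem_univ _, by positivity⟩
  have hyS : ∑ v, y v ^ 2 = ∑ v, x v ^ 2 := Finset.sum_congr rfl fun v _ => hysq v
  have hR : ∑ u, x u * (G.signlessLap.mulVec x) u = t * ∑ v, x v ^ 2 := by
    rw [hev, Finset.mul_sum]
    refine Finset.sum_congr rfl fun v _ => ?_
    simp only [Pi.smul_apply, smul_eq_mul]; ring
  have hsign : ∀ ⦃u v⦄, G.Adj u v → ε u * ε v = -1 := by
    intro u v h
    have huv := hC h
    simp only [hε]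
    split_ifs with h1 h2 h2 <;> norm_num
    · exact absurd (h1.trans h2.symm) huv
    · exact absurd (fin2_eq h1 h2) huv
  have hA : ∀ ⦃u v⦄, G.Adj u v → (x u + x v)^2 = (y u - y v)^2 := by
    intro u v h
    have e1 := hε2 u; have e2 := hε2 v; have e3 := hsign h
    simp only [hy]
    linear_combination (-(x u)^2) * e1 + (-(x v)^2) * e2 + (2 * x u * x v) * e3
  have hfull : ∑ u, ∑ v, (y u - y v)^2
      = 2 * (Fintype.card V : ℝ) * (∑ v, x v ^ 2) - 2 * (∑ v, y v) ^ 2 := by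
    rw [← hyS]
    have expand : ∀ u v : V, (y u - y v)^2 = y u^2 - 2*(y u * y v) + y v^2 :=
      fun u v => by ring
    simp only [expand, Finset.sum_add_distrib, Finset.sum_sub_distrib, Finset.sum_const,
      Finset.card_univ, nsmul_eq_mul, ← Finset.mul_sum, ← Finset.sum_mul]
    ring
  have hADJ : ∑ u, ∑ v, (if G.Adj u v then (y u - y v)^2 else 0) = 2 * (t * ∑ v, x v ^ 2) := by
    rw [← hR, ← quad_eq]
    refine Finset.sum_congr rfl fun u _ => Finset.sum_congr rfl fun v _ => ?_
    split_ifs with h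
    · exact (hA h).symm
    · rfl
  have hle : ∑ u, ∑ v, (if G.Adj u v then (y u - y v)^2 else 0) ≤ ∑ u, ∑ v, (y u - y v)^2 := by
    refine Finset.sum_le_sum fun u _ => Finset.sum_le_sum fun v _ => ?_
    split_ifs
    · exact le_refl _
    · exact sq_nonneg _
  constructor
  · nlinarith [sq_nonneg (∑ v, y v)]
  · intro ht
    have hsum0 : ∑ u, ∑ v, ((y u - y v)^2 - (if G.Adj u v then (y u - y v)^2 else 0))
        + 2 * (∑ v, y v) ^ 2 = 0 := by
      simp only [Finset.sum_sub_distrib]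
      rw [hfull, hADJ, ht]
      ring
    have h0 : (0:ℝ) ≤ ∑ u, ∑ v, ((y u - y v)^2 - (if G.Adj u v then (y u - y v)^2 else 0)) := by
      refine Finset.sum_nonneg fun u _ => Finset.sum_nonneg fun v _ => ?_
      split_ifs
      · simp
      · simpa using sq_nonneg (y u - y v)
    have hSy : (∑ v, y v) = 0 := by nlinarith [sq_nonneg (∑ v, y v)]
    have hz : ∑ u, ∑ v, ((y u - y v)^2 - (if G.Adj u v then (y u - y v)^2 else 0)) = 0 := by
      rw [hSy] at hsum0; linarith [hsum0]
    have hterm : ∀ u v, ¬ G.Adj u v → y u = y v := by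
      intro u v huv
      have houter := (Finset.sum_eq_zero_iff_of_nonneg
        (fun u _ => Finset.sum_nonneg fun v _ => by
          split_ifs <;> nlinarith [sq_nonneg (y u - y v)])).mp hz u (Finset.mem_univ u)
      have hinner := (Finset.sum_eq_zero_iff_of_nonneg
        (fun v _ => by
          split_ifs <;> nlinarith [sq_nonneg (y u - y v)])).mp houter v (Finset.mem_univ v)
      rw [if_neg huv, sub_zero] at hinner
      exact sub_eq_zero.mp (pow_eq_zero_iff (by norm_num) |>.mp hinner)
    intro u v hCuv
    by_contra hadj
    have hyuv : y u = y v := hterm u v hadj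
    have hall : ∀ w, y w = y u := by
      intro w
      by_cases hw : G.Adj w u
      · have h2 : ¬ G.Adj w v := fun h => (hC h) (fin2_eq (hC hw) (Ne.symm hCuv))
        exact (hterm w v h2).trans hyuv.symm
      · exact hterm w u hw
    have hsumy : ∑ w, y w = (Fintype.card V : ℝ) * y u := by
      rw [Finset.sum_congr rfl (fun w _ => hall w), Finset.sum_const, Finset.card_univ,
        nsmul_eq_mul]
    have hc : 0 < Fintype.card V := Fintype.card_pos_iff.mpr ⟨v₀⟩
    have hyu : y u = 0 := by
      have := hsumy.symm.trans hSy
      rcases mul_eq_zero.mp this with h | h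
      · exact absurd h (by positivity)
      · exact h
    exact hv₀ (hyx v₀ (by rw [hall v₀, hyu]))

lemma eig_finite {V : Type*} [Fintype V] (M : Matrix V V ℝ) :
    {t : ℝ | ∃ x : V → ℝ, x ≠ 0 ∧ M.mulVec x = t • x}.Finite := by
  apply Set.Finite.subset (Module.End.finite_hasEigenvalue (Matrix.mulVecLin M))
  rintro t ⟨x, hx, hMx⟩
  exact Module.End.hasEigenvalue_of_hasEigenvector
    ⟨Module.End.mem_eigenspace_iff.mpr (by simpa [Matrix.mulVecLin_apply] using hMx), hx⟩

lemma q_le_card {V : Type*} [Fintype V] (G : SimpleGraph V) (C : V → Fin 2)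
    (hC : ∀ ⦃u v⦄, G.Adj u v → C u ≠ C v) : G.qIndex ≤ (Fintype.card V : ℝ) := by
  apply Real.sSup_le
  · rintro t ⟨x, hx, hev⟩
    exact (key_lemma G C hC t x hx hev).1
  · positivity

lemma iso_eig {V W : Type*} [Fintype V] [Fintype W] {G : SimpleGraph V} {H : SimpleGraph W}
    (e : G ≃g H) (t : ℝ) (x : W → ℝ) (hx : x ≠ 0)
    (h : H.signlessLap.mulVec x = t • x) :
    ∃ z : V → ℝ, z ≠ 0 ∧ G.signlessLap.mulVec z = t • z := by
  refine ⟨x ∘ e, ?_, ?_⟩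
  · intro hz
    apply hx
    funext w
    have := congrFun hz (e.symm w)
    simpa using this
  · funext u
    rw [mulVec_eq]
    have h1 : (∑ v : V, if G.Adj u v then (x ∘ e) u + (x ∘ e) v else 0)
        = ∑ v : V, (fun w => if H.Adj (e u) w then x (e u) + x w else 0) (e.toEquiv v) := by
      refine Finset.sum_congr rfl fun v _ => ?_
      simp only [Function.comp_apply, RelIso.coe_fn_toEquiv, e.map_adj_iff]
    rw [h1, Equiv.sum_comp e.toEquiv (fun w => if H.Adj (e u) w then x (e u) + x w else 0),
      ← mulVec_eq, h]
    simp

lemma K_eig (a b : ℕ) :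
    (completeBipartiteGraph (Fin a) (Fin b)).signlessLap.mulVec
      (Sum.elim (fun _ => (b:ℝ)) (fun _ => (a:ℝ)))
    = ((a + b : ℕ) : ℝ) • (Sum.elim (fun _ => (b:ℝ)) (fun _ => (a:ℝ))) := by
  funext u
  rw [mulVec_eq]
  cases u with
  | inl i =>
    rw [Fintype.sum_sum_type]
    simp [completeBipartiteGraph, Finset.sum_const, Finset.card_univ]
    ring
  | inr i =>
    rw [Fintype.sum_sum_type]
    simp [completeBipartiteGraph, Finset.sum_const, Finset.card_univ]
    ring

lemma struct_lemma {n τ : ℕ} (hτn : τ < n) (G : SimpleGraph (Fin n))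
    (C : Fin n → Fin 2) (hadj : ∀ u v, G.Adj u v ↔ C u ≠ C v) (hdis : G.dissocNum = τ) :
    Nonempty (G ≃g completeBipartiteGraph (Fin τ) (Fin (n - τ))) := by
  set Kset : Set ℕ := {k : ℕ | ∃ S : Finset (Fin n), G.IsDissocSet S ∧ S.card = k} with hK
  have hsup : sSup Kset = τ := hdis
  have bdd : BddAbove Kset := by
    refine ⟨n, ?_⟩
    rintro k ⟨S, _, rfl⟩
    simpa using S.card_le_univ
  -- the two colour classes
  set A : Finset (Fin n) := Finset.univ.filter (fun v => C v = 0) with hA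
  set B : Finset (Fin n) := Finset.univ.filter (fun v => ¬ C v = 0) with hB
  have hab : A.card + B.card = n := by
    rw [hA, hB, Finset.card_filter_add_card_filter_not]
    simp
  have classDissoc : ∀ (S : Finset (Fin n)), (∀ v ∈ S, ∀ w ∈ S, C v = C w) →
      G.IsDissocSet S := by
    intro S hSc v hv u hu _ _ h1 _
    exact absurd (hSc v hv u hu) ((hadj v u).mp h1)
  have hAK : A.card ∈ Kset := ⟨A, classDissoc A (fun v hv w hw => by
    rw [(Finset.mem_filter.mp hv).2, (Finset.mem_filter.mp hw).2]), rfl⟩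
  have hBK : B.card ∈ Kset := ⟨B, classDissoc B (fun v hv w hw => by
    have h1 := (Finset.mem_filter.mp hv).2
    have h2 := (Finset.mem_filter.mp hw).2
    exact fin2_eq h1 h2), rfl⟩
  have haτ : A.card ≤ τ := hsup ▸ le_csSup bdd hAK
  have hbτ : B.card ≤ τ := hsup ▸ le_csSup bdd hBK
  -- nonempty classes
  have hA0 : 0 < A.card := by
    rcases Nat.eq_zero_or_pos A.card with h | h
    swap
    · exact h
    exfalso
    have hall : ∀ v, C v ≠ 0 := by
      intro v hv
      have : v ∈ A := Finset.mem_filter.mpr ⟨Finset.mem_univ v, hv⟩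
      simp [Finset.card_eq_zero.mp h] at this
    have : (n : ℕ) ∈ Kset := ⟨Finset.univ, classDissoc _ (fun v _ w _ =>
      fin2_eq (hall v) (hall w)), by simp⟩
    exact absurd (hsup ▸ le_csSup bdd this) (by omega)
  have hB0 : 0 < B.card := by
    rcases Nat.eq_zero_or_pos B.card with h | h
    swap
    · exact h
    exfalso
    have hall : ∀ v, C v = 0 := by
      intro v
      by_contra hv
      have : v ∈ B := Finset.mem_filter.mpr ⟨Finset.mem_univ v, hv⟩
      simp [Finset.card_eq_zero.mp h] at this
    have : (n : ℕ) ∈ Kset := ⟨Finset.univ, classDissoc _ (fun v _ w _ =>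
      (hall v).trans (hall w).symm), by simp⟩
    exact absurd (hsup ▸ le_csSup bdd this) (by omega)
  -- τ = max
  have hτK : τ ∈ Kset := hsup ▸ Nat.sSup_mem ⟨A.card, hAK⟩ bdd
  have hmax : τ = max A.card B.card := by
    obtain ⟨S, hSd, hScard⟩ := hτK
    by_cases hSA : ∀ v ∈ S, C v = 0
    · have hsub : S ⊆ A := fun v hv => Finset.mem_filter.mpr ⟨Finset.mem_univ v, hSA v hv⟩
      have : τ ≤ A.card := hScard ▸ Finset.card_le_card hsub
      omega
    by_cases hSB : ∀ v ∈ S, C v ≠ 0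
    · have hsub : S ⊆ B := fun v hv => Finset.mem_filter.mpr ⟨Finset.mem_univ v, hSB v hv⟩
      have : τ ≤ B.card := hScard ▸ Finset.card_le_card hsub
      omega
    · push_neg at hSA hSB
      obtain ⟨w, hwS, hw⟩ := hSA
      obtain ⟨u₀, hu₀S, hu₀⟩ := hSB
      have hc1 : (S.filter (fun v => C v = 0)).card ≤ 1 := by
        apply Finset.card_le_one.mpr
        intro v hv v' hv'
        have h1 : G.Adj w v := (hadj w v).mpr (fun h => hw (h.trans (Finset.mem_filter.mp hv).2))
        have h2 : G.Adj w v' := (hadj w v').mpr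
          (fun h => hw (h.trans (Finset.mem_filter.mp hv').2))
        exact hSd w hwS v (Finset.filter_subset _ _ hv) v' (Finset.filter_subset _ _ hv') h1 h2
      have hc2 : (S.filter (fun v => ¬ C v = 0)).card ≤ 1 := by
        apply Finset.card_le_one.mpr
        intro v hv v' hv'
        have h1 : G.Adj u₀ v := (hadj u₀ v).mpr
          (fun h => (Finset.mem_filter.mp hv).2 (h.symm.trans hu₀))
        have h2 : G.Adj u₀ v' := (hadj u₀ v').mpr
          (fun h => (Finset.mem_filter.mp hv').2 (h.symm.trans hu₀))
        exact hSd u₀ hu₀S v (Finset.filter_subset _ _ hv) v' (Finset.filter_subset _ _ hv') h1 h2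
      have hS2 : S.card ≤ 2 := by
        have := Finset.card_filter_add_card_filter_not (s := S)
          (p := fun v => C v = 0)
        omega
      -- now a,b ≤ τ ≤ 2, a,b ≥ 1
      by_cases hab1 : A.card = 1 ∧ B.card = 1
      · exfalso
        have hn2 : n = 2 := by omega
        have : (n : ℕ) ∈ Kset := by
          refine ⟨Finset.univ, ?_, by simp⟩
          intro v _ u _ w' _ h1 h2
          have hu : u ≠ v := fun h => G.irrefl (h ▸ h1)
          have hw' : w' ≠ v := fun h => G.irrefl (h ▸ h2)
          have hcard : (Finset.univ.erase v).card ≤ 1 := by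
            rw [Finset.card_erase_of_mem (Finset.mem_univ v)]
            simp [hn2]
          exact Finset.card_le_one.mp hcard u (Finset.mem_erase.mpr ⟨hu, Finset.mem_univ u⟩)
            w' (Finset.mem_erase.mpr ⟨hw', Finset.mem_univ w'⟩)
        exact absurd (hsup ▸ le_csSup bdd this) (by omega)
      · omega
  -- generic construction of the isomorphism from a bipartition predicate
  have main : ∀ (p : Fin n → Prop) (eP : {v // p v} ≃ Fin τ)
      (eQ : {v // ¬ p v} ≃ Fin (n - τ)),
      (∀ u v, G.Adj u v ↔ ¬(p u ↔ p v)) →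
      Nonempty (G ≃g completeBipartiteGraph (Fin τ) (Fin (n - τ))) := by
    intro p eP eQ hpiff
    set e : Fin n ≃ (Fin τ ⊕ Fin (n - τ)) :=
      (Equiv.sumCompl p).symm.trans (Equiv.sumCongr eP eQ) with he
    have he1 : ∀ w (hw : p w), e w = Sum.inl (eP ⟨w, hw⟩) := by
      intro w hw
      simp [he, Equiv.sumCompl_symm_apply_of_pos hw]
    have he2 : ∀ w (hw : ¬ p w), e w = Sum.inr (eQ ⟨w, hw⟩) := by
      intro w hw
      simp [he, Equiv.sumCompl_symm_apply_of_neg hw]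
    refine ⟨⟨e, ?_⟩⟩
    intro u v
    rw [hpiff u v]
    by_cases hu : p u <;> by_cases hv : p v
    · rw [he1 u hu, he1 v hv]; simp; tauto
    · rw [he1 u hu, he2 v hv]; simp; tauto
    · rw [he2 u hu, he1 v hv]; simp; tauto
    · rw [he2 u hu, he2 v hv]; simp; tauto
  rcases le_total B.card A.card with h | h
  · refine main (fun v => C v = 0) (Fintype.equivFinOfCardEq ?_)
      (Fintype.equivFinOfCardEq ?_) (fun u v => ?_)
    · rw [Fintype.card_subtype, ← hA]; omega
    · rw [Fintype.card_subtype, ← hB]; omega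
    · rw [hadj]
      have h2 : ∀ x y : Fin 2, (x ≠ y) ↔ ¬((x = 0) ↔ (y = 0)) := by decide
      exact h2 (C u) (C v)
  · refine main (fun v => ¬ C v = 0) (Fintype.equivFinOfCardEq ?_)
      (Fintype.equivFinOfCardEq ?_) (fun u v => ?_)
    · rw [Fintype.card_subtype, ← hB]; omega
    · have hnn : ∀ v : Fin n, (¬ ¬ C v = 0) ↔ (C v = 0) := fun v => not_not
      rw [Fintype.card_subtype]
      have : (Finset.univ.filter (fun v => ¬ ¬ C v = 0)).card
          = (Finset.univ.filter (fun v => C v = 0)).card := by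
        congr 1
        apply Finset.filter_congr
        intro v _
        simp
      rw [this, ← hA]; omega
    · rw [hadj]
      have h2 : ∀ x y : Fin 2, (x ≠ y) ↔ ¬(¬(x = 0) ↔ ¬(y = 0)) := by decide
      exact h2 (C u) (C v)

/-- **Corollary 5.2.** If `G` is a bipartite graph of order `n` with dissociation
number `τ`, then `q(G) ≤ n` with equality iff `G ≅ K_{τ,n-τ}`. -/
theorem bipartite_q_bound (n τ : ℕ) (hn : 0 < n) (hτ : 0 < τ) (hτn : τ < n)
    (G : SimpleGraph (Fin n)) (hbip : G.Colorable 2) (hdis : G.dissocNum = τ) :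
    G.qIndex ≤ (n : ℝ) ∧
    (G.qIndex = (n : ℝ) ↔ Nonempty (G ≃g completeBipartiteGraph (Fin τ) (Fin (n - τ)))) := by
  obtain ⟨Cc⟩ := hbip
  set C : Fin n → Fin 2 := fun v => Cc v with hCdef
  have hC : ∀ ⦃u v : Fin n⦄, G.Adj u v → C u ≠ C v := fun u v h => Cc.valid h
  have hbound : ∀ t ∈ {t : ℝ | ∃ x : Fin n → ℝ, x ≠ 0 ∧ (G.signlessLap).mulVec x = t • x},
      t ≤ (n : ℝ) := by
    rintro t ⟨x, hx, hev⟩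
    have := (key_lemma G C hC t x hx hev).1
    simpa using this
  have hqle : G.qIndex ≤ (n : ℝ) := by
    unfold SimpleGraph.qIndex
    exact Real.sSup_le hbound (by positivity)
  refine ⟨hqle, ?_, ?_⟩
  · intro hq
    have hne : {t : ℝ | ∃ x : Fin n → ℝ, x ≠ 0 ∧ (G.signlessLap).mulVec x = t • x}.Nonempty := by
      by_contra hemp
      rw [Set.not_nonempty_iff_eq_empty] at hemp
      unfold SimpleGraph.qIndex at hq
      rw [hemp, Real.sSup_empty] at hq
      have : (n : ℝ) ≠ 0 := by positivity
      exact this hq.symm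
    have hmem : G.qIndex ∈
        {t : ℝ | ∃ x : Fin n → ℝ, x ≠ 0 ∧ (G.signlessLap).mulVec x = t • x} :=
      hne.csSup_mem (eig_finite _)
    rw [hq] at hmem
    obtain ⟨x, hx, hev⟩ := hmem
    have hfull := (key_lemma G C hC (n : ℝ) x hx hev).2 (by simp)
    have hadj : ∀ u v, G.Adj u v ↔ C u ≠ C v :=
      fun u v => ⟨fun h => hC h, fun h => hfull u v h⟩
    exact struct_lemma hτn G C hadj hdis
  · rintro ⟨e⟩
    have hKeig := K_eig τ (n - τ)
    have hτsum : τ + (n - τ) = n := by omega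
    rw [hτsum] at hKeig
    have hx0 : (Sum.elim (fun _ => ((n - τ : ℕ) : ℝ)) (fun _ => (τ : ℝ)) :
        (Fin τ ⊕ Fin (n - τ)) → ℝ) ≠ 0 := by
      intro hzz
      have h0 : ((n - τ : ℕ) : ℝ) = 0 := congrFun hzz (Sum.inl ⟨0, hτ⟩)
      have : (0 : ℕ) < n - τ := by omega
      rw [Nat.cast_eq_zero] at h0
      omega
    obtain ⟨z, hz, hzev⟩ := iso_eig e (n : ℝ) _ hx0 hKeig
    have hmem : (n : ℝ) ∈
        {t : ℝ | ∃ x : Fin n → ℝ, x ≠ 0 ∧ (G.signlessLap).mulVec x = t • x} := ⟨z, hz, hzev⟩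
    have hge : (n : ℝ) ≤ G.qIndex := by
      unfold SimpleGraph.qIndex
      exact le_csSup ⟨(n : ℝ), hbound⟩ hmem
    linarith
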